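/- Let u1, u2 be positive reals, κ ≥ 0, and 0 ≤ η ≤ 2κ. Let U ∈ ℝ^{1×N1} have first two entries u1, u2 and zeros elsewhere, and b = 2κ. Then the set of minimizers of ‖x‖₁ subject to |u1 x1 + u2 x2 − 2κ| ≤ η equals: {((2κ−η)/u1) e1} if u1 > u2; {((2κ−η)/u2) e2} if u1 < u2; and {((2κ−η)/u1)(t e1 + (1−t) e2) : t ∈ [0,1]} if u1 = u2. -/

import Mathlib

lemma pair_le {N : ℕ} (i j : Fin N) (hij : i ≠ j) (x : Fin N → ℝ) :
    |x i| + |x j| ≤ ∑ k, |x k| := by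
  have h := Finset.sum_le_sum_of_subset_of_nonneg
    (Finset.subset_univ ({i, j} : Finset (Fin N)))
    (fun k _ _ => abs_nonneg (x k))
  rwa [Finset.sum_pair hij] at h

lemma lb_aux {N : ℕ} (i j : Fin N) (hij : i ≠ j) (a b κ η : ℝ)
    (hb : 0 < b) (hba : b ≤ a) (y : Fin N → ℝ)
    (hfeas : |a * y i + b * y j - 2*κ| ≤ η) :
    (2*κ - η) / a ≤ ∑ k, |y k| := by
  have ha : 0 < a := lt_of_lt_of_le hb hba
  have h1 : 2*κ - η ≤ a * y i + b * y j := by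
    have := (abs_le.mp hfeas).1; linarith
  have h2 : a * y i ≤ a * |y i| := mul_le_mul_of_nonneg_left (le_abs_self _) ha.le
  have h3 : b * y j ≤ a * |y j| :=
    le_trans (mul_le_mul_of_nonneg_left (le_abs_self _) hb.le)
      (mul_le_mul_of_nonneg_right hba (abs_nonneg _))
  have h4 := pair_le i j hij y
  rw [div_le_iff₀ ha]
  nlinarith [mul_le_mul_of_nonneg_left h4 ha.le]

lemma min_struct {N : ℕ} (i j : Fin N) (hij : i ≠ j) (a b κ η : ℝ)
    (hb : 0 < b) (hba : b ≤ a) (x : Fin N → ℝ)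
    (hfeas : |a * x i + b * x j - 2*κ| ≤ η)
    (hsum : ∑ k, |x k| ≤ (2*κ - η)/a) :
    0 ≤ x i ∧ 0 ≤ x j ∧ (a - b) * x j = 0 ∧
      a * x i + b * x j = 2*κ - η ∧ ∀ k, k ≠ i → k ≠ j → x k = 0 := by
  have ha : 0 < a := lt_of_lt_of_le hb hba
  set S := ∑ k, |x k| with hS
  have h1 : 2*κ - η ≤ a * x i + b * x j := by
    have := (abs_le.mp hfeas).1; linarith
  have haS : a * S ≤ 2*κ - η := by
    have := (le_div_iff₀ ha).mp hsum; linarith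
  have hpair := pair_le i j hij x
  have ht1 : 0 ≤ a * (|x i| - x i) :=
    mul_nonneg ha.le (sub_nonneg.mpr (le_abs_self _))
  have ht2 : 0 ≤ b * (|x j| - x j) :=
    mul_nonneg hb.le (sub_nonneg.mpr (le_abs_self _))
  have ht3 : 0 ≤ (a - b) * |x j| := mul_nonneg (by linarith) (abs_nonneg _)
  have ht4 : 0 ≤ a * (S - |x i| - |x j|) := mul_nonneg ha.le (by linarith)
  have hsum0 : a * (|x i| - x i) + b * (|x j| - x j) + (a - b) * |x j|
      + a * (S - |x i| - |x j|) = a * S - (a * x i + b * x j) := by ring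
  have hle : a * (|x i| - x i) + b * (|x j| - x j) + (a - b) * |x j|
      + a * (S - |x i| - |x j|) ≤ 0 := by rw [hsum0]; linarith
  have ht1e : a * (|x i| - x i) = 0 := by linarith
  have ht2e : b * (|x j| - x j) = 0 := by linarith
  have ht3e : (a - b) * |x j| = 0 := by linarith
  have ht4e : a * (S - |x i| - |x j|) = 0 := by linarith
  have hxi : |x i| = x i := by
    rcases mul_eq_zero.mp ht1e with h | h
    · exact absurd h ha.ne'
    · linarith
  have hxj : |x j| = x j := by
    rcases mul_eq_zero.mp ht2e with h | h
    · exact absurd h hb.ne'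
    · linarith
  have hS2 : S = |x i| + |x j| := by
    rcases mul_eq_zero.mp ht4e with h | h
    · exact absurd h ha.ne'
    · linarith
  have h3' : (a - b) * x j = 0 := by rw [hxj] at ht3e; exact ht3e
  have hab : a * x j = b * x j := by linear_combination h3'
  have haSx : a * S = a * x i + a * x j := by rw [hS2, hxi, hxj]; ring
  have heq : a * x i + b * x j = 2*κ - η := by linarith
  refine ⟨by rw [← hxi]; exact abs_nonneg _, by rw [← hxj]; exact abs_nonneg _, h3', heq, ?_⟩
  have hsd : ∑ k ∈ Finset.univ \ ({i, j} : Finset (Fin N)), |x k| = 0 := by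
    have h := Finset.sum_sdiff (Finset.subset_univ ({i, j} : Finset (Fin N)))
      (f := fun k => |x k|)
    rw [Finset.sum_pair hij] at h
    linarith [h]
  intro k hk1 hk2
  have hk : k ∈ Finset.univ \ ({i, j} : Finset (Fin N)) := by simp [hk1, hk2]
  have := (Finset.sum_eq_zero_iff_of_nonneg (fun k _ => abs_nonneg (x k))).mp hsd k hk
  exact abs_eq_zero.mp this

lemma sum_combo {N : ℕ} (hN : 2 ≤ N) (α β : ℝ) (hα : 0 ≤ α) (hβ : 0 ≤ β) :
    ∑ k : Fin N, |α * (if (k:ℕ) = 0 then (1:ℝ) else 0) + β * (if (k:ℕ) = 1 then (1:ℝ) else 0)|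
      = α + β := by
  have h0 : (⟨0, by omega⟩ : Fin N) ≠ (⟨1, by omega⟩ : Fin N) := by simp [Fin.ext_iff]
  rw [← Finset.sum_subset (Finset.subset_univ
    ({⟨0, by omega⟩, ⟨1, by omega⟩} : Finset (Fin N)))]
  · rw [Finset.sum_pair h0]
    simp [abs_of_nonneg, hα, hβ]
  · intro k _ hk
    simp only [Finset.mem_insert, Finset.mem_singleton] at hk
    push_neg at hk
    have h1 : (k:ℕ) ≠ 0 := fun h => hk.1 (Fin.ext h)
    have h2 : (k:ℕ) ≠ 1 := fun h => hk.2 (Fin.ext h)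
    simp [h1, h2]

theorem stmt_1 (N1 : ℕ) (hN : 2 ≤ N1) (u1 u2 κ η : ℝ)
    (hu1 : 0 < u1) (hu2 : 0 < u2) (hκ : 0 ≤ κ) (hη0 : 0 ≤ η) (hη : η ≤ 2 * κ) :
    let e1 : Fin N1 → ℝ := fun i => if (i : ℕ) = 0 then 1 else 0
    let e2 : Fin N1 → ℝ := fun i => if (i : ℕ) = 1 then 1 else 0
    let feas : (Fin N1 → ℝ) → Prop := fun x =>
      |u1 * x ⟨0, by omega⟩ + u2 * x ⟨1, by omega⟩ - 2 * κ| ≤ η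
    let argmin : Set (Fin N1 → ℝ) :=
      {x | feas x ∧ ∀ y, feas y → (∑ i, |x i|) ≤ ∑ i, |y i|}
    (u2 < u1 → argmin = {((2 * κ - η) / u1) • e1}) ∧
    (u1 < u2 → argmin = {((2 * κ - η) / u2) • e2}) ∧
    (u1 = u2 → argmin =
      {x | ∃ t ∈ Set.Icc (0 : ℝ) 1,
        x = ((2 * κ - η) / u1) • (t • e1 + (1 - t) • e2)}) := by
  intro e1 e2 feas argmin
  set i0 : Fin N1 := ⟨0, by omega⟩ with hi0
  set i1 : Fin N1 := ⟨1, by omega⟩ with hi1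
  have hij : i0 ≠ i1 := by simp [hi0, hi1, Fin.ext_iff]
  set c : ℝ := 2 * κ - η with hc
  have hc0 : 0 ≤ c := by rw [hc]; linarith
  have hfeas_def : ∀ x, feas x ↔ |u1 * x i0 + u2 * x i1 - 2*κ| ≤ η := fun x => Iff.rfl
  have he1i0 : e1 i0 = 1 := by simp [e1, hi0]
  have he1i1 : e1 i1 = 0 := by simp [e1, hi1]
  have he2i0 : e2 i0 = 0 := by simp [e2, hi0]
  have he2i1 : e2 i1 = 1 := by simp [e2, hi1]
  have hcabs : |c - 2*κ| = η := by
    rw [hc]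
    have : 2*κ - η - 2*κ = -η := by ring
    rw [this, abs_neg, abs_of_nonneg hη0]
  have hsum_ab : ∀ α β : ℝ, 0 ≤ α → 0 ≤ β → ∀ x : Fin N1 → ℝ,
      (∀ k, x k = α * e1 k + β * e2 k) → ∑ k, |x k| = α + β := by
    intro α β hα hβ x hx
    rw [← sum_combo hN α β hα hβ]
    exact Finset.sum_congr rfl (fun k _ => by rw [hx k])
  -- case 1 : u2 < u1
  refine ⟨?_, ?_, ?_⟩
  · intro h
    have hz : ∀ k, ((c/u1) • e1) k = (c/u1) * e1 k + 0 * e2 k := by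
      intro k; simp
    have hzfeas : feas ((c/u1) • e1) := by
      rw [hfeas_def]
      rw [hz i0, hz i1, he1i0, he1i1, he2i0, he2i1]
      have : u1 * ((c/u1) * 1 + 0 * 0) + u2 * ((c/u1) * 0 + 0 * 1) - 2*κ = c - 2*κ := by
        field_simp; ring
      rw [this, hcabs]
    have hzsum : ∑ k, |((c/u1) • e1) k| = c/u1 := by
      have := hsum_ab (c/u1) 0 (div_nonneg hc0 hu1.le) le_rfl _ hz
      rw [this]; ring
    ext x
    simp only [Set.mem_setOf_eq, Set.mem_singleton_iff]
    constructor
    · rintro ⟨hf, hmin⟩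
      have hsum : ∑ k, |x k| ≤ c/u1 := by
        have := hmin _ hzfeas; rw [hzsum] at this; exact this
      obtain ⟨hx0, hx1, h3, heq, hzero⟩ :=
        min_struct i0 i1 hij u1 u2 κ η hu2 h.le x ((hfeas_def x).mp hf) (by rw [← hc]; exact hsum)
      have hx1z : x i1 = 0 := by
        rcases mul_eq_zero.mp h3 with hh | hh
        · exfalso; linarith
        · exact hh
      have hx0v : x i0 = c/u1 := by
        rw [hx1z] at heq
        rw [eq_div_iff hu1.ne']
        linarith [heq]
      funext k
      rcases Nat.lt_or_ge (k : ℕ) 2 with hk | hk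
      · interval_cases hkv : (k : ℕ)
        · have : k = i0 := Fin.ext hkv
          rw [this, hz i0, he1i0, he2i0, hx0v]; ring
        · have : k = i1 := Fin.ext hkv
          rw [this, hz i1, he1i1, he2i1, hx1z]; ring
      · have hk0 : k ≠ i0 := by
          intro hh; rw [hh] at hk; simp [hi0] at hk
        have hk1 : k ≠ i1 := by
          intro hh; rw [hh] at hk; simp [hi1] at hk
        rw [hzero k hk0 hk1, hz k]
        have hk0' : (k : ℕ) ≠ 0 := by omega
        have hk1' : (k : ℕ) ≠ 1 := by omega
        simp [e1, e2, hk0', hk1']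
    · rintro rfl
      refine ⟨hzfeas, fun y hy => ?_⟩
      rw [hzsum, hc]
      exact lb_aux i0 i1 hij u1 u2 κ η hu2 h.le y ((hfeas_def y).mp hy)
  -- case 2 : u1 < u2
  · intro h
    have hcomm : ∀ x : Fin N1 → ℝ,
        |u1 * x i0 + u2 * x i1 - 2*κ| = |u2 * x i1 + u1 * x i0 - 2*κ| := by
      intro x; ring_nf
    have hz : ∀ k, ((c/u2) • e2) k = 0 * e1 k + (c/u2) * e2 k := by
      intro k; simp
    have hzfeas : feas ((c/u2) • e2) := by
      rw [hfeas_def]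
      rw [hz i0, hz i1, he1i0, he1i1, he2i0, he2i1]
      have : u1 * (0 * 1 + (c/u2) * 0) + u2 * (0 * 0 + (c/u2) * 1) - 2*κ = c - 2*κ := by
        field_simp; ring
      rw [this, hcabs]
    have hzsum : ∑ k, |((c/u2) • e2) k| = c/u2 := by
      have := hsum_ab 0 (c/u2) le_rfl (div_nonneg hc0 hu2.le) _ hz
      rw [this]; ring
    ext x
    simp only [Set.mem_setOf_eq, Set.mem_singleton_iff]
    constructor
    · rintro ⟨hf, hmin⟩
      have hsum : ∑ k, |x k| ≤ c/u2 := by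
        have := hmin _ hzfeas; rw [hzsum] at this; exact this
      have hf' : |u2 * x i1 + u1 * x i0 - 2*κ| ≤ η := by
        rw [← hcomm]; exact (hfeas_def x).mp hf
      obtain ⟨hx1, hx0, h3, heq, hzero⟩ :=
        min_struct i1 i0 hij.symm u2 u1 κ η hu1 h.le x hf' (by rw [← hc]; exact hsum)
      have hx0z : x i0 = 0 := by
        rcases mul_eq_zero.mp h3 with hh | hh
        · exfalso; linarith
        · exact hh
      have hx1v : x i1 = c/u2 := by
        rw [hx0z] at heq
        rw [eq_div_iff hu2.ne']
        linarith [heq]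
      funext k
      rcases Nat.lt_or_ge (k : ℕ) 2 with hk | hk
      · interval_cases hkv : (k : ℕ)
        · have : k = i0 := Fin.ext hkv
          rw [this, hz i0, he1i0, he2i0, hx0z]; ring
        · have : k = i1 := Fin.ext hkv
          rw [this, hz i1, he1i1, he2i1, hx1v]; ring
      · have hk0 : k ≠ i0 := by
          intro hh; rw [hh] at hk; simp [hi0] at hk
        have hk1 : k ≠ i1 := by
          intro hh; rw [hh] at hk; simp [hi1] at hk
        rw [hzero k hk1 hk0, hz k]
        have hk0' : (k : ℕ) ≠ 0 := by omega
        have hk1' : (k : ℕ) ≠ 1 := by omega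
        simp [e1, e2, hk0', hk1']
    · rintro rfl
      refine ⟨hzfeas, fun y hy => ?_⟩
      rw [hzsum, hc]
      have hy' : |u2 * y i1 + u1 * y i0 - 2*κ| ≤ η := by
        rw [← hcomm]; exact (hfeas_def y).mp hy
      exact lb_aux i1 i0 hij.symm u2 u1 κ η hu1 h.le y hy'
  -- case 3 : u1 = u2
  · intro h
    subst h
    have hzt : ∀ t : ℝ, ∀ k, ((c/u1) • (t • e1 + (1-t) • e2)) k
        = ((c/u1)*t) * e1 k + ((c/u1)*(1-t)) * e2 k := by
      intro t k; simp; ring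
    have hztfeas : ∀ t : ℝ, feas ((c/u1) • (t • e1 + (1-t) • e2)) := by
      intro t
      rw [hfeas_def]
      rw [hzt t i0, hzt t i1, he1i0, he1i1, he2i0, he2i1]
      have : u1 * (((c/u1)*t) * 1 + ((c/u1)*(1-t)) * 0)
          + u1 * (((c/u1)*t) * 0 + ((c/u1)*(1-t)) * 1) - 2*κ = c - 2*κ := by
        field_simp; ring
      rw [this, hcabs]
    have hztsum : ∀ t ∈ Set.Icc (0:ℝ) 1,
        ∑ k, |((c/u1) • (t • e1 + (1-t) • e2)) k| = c/u1 := by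
      intro t ht
      have h1 : 0 ≤ (c/u1)*t := mul_nonneg (div_nonneg hc0 hu1.le) ht.1
      have h2 : 0 ≤ (c/u1)*(1-t) := mul_nonneg (div_nonneg hc0 hu1.le) (by linarith [ht.2])
      have := hsum_ab _ _ h1 h2 _ (hzt t)
      rw [this]; ring
    ext x
    simp only [Set.mem_setOf_eq]
    constructor
    · rintro ⟨hf, hmin⟩
      have hsum : ∑ k, |x k| ≤ c/u1 := by
        have := hmin _ (hztfeas 1); rw [hztsum 1 ⟨zero_le_one, le_rfl⟩] at this; exact this
      obtain ⟨hx0, hx1, _, heq, hzero⟩ :=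
        min_struct i0 i1 hij u1 u1 κ η hu1 le_rfl x ((hfeas_def x).mp hf) (by rw [← hc]; exact hsum)
      rw [← hc] at heq
      rcases eq_or_lt_of_le hc0 with hceq | hcpos
      · -- c = 0, so x = 0, take t = 0
        refine ⟨0, ⟨le_rfl, zero_le_one⟩, ?_⟩
        have hx0z : x i0 = 0 := by nlinarith
        have hx1z : x i1 = 0 := by nlinarith
        funext k
        rw [hzt 0 k]
        rcases Nat.lt_or_ge (k : ℕ) 2 with hk | hk
        · interval_cases hkv : (k : ℕ)
          · have : k = i0 := Fin.ext hkv
            rw [this, he1i0, he2i0, hx0z, ← hceq]; ring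
          · have : k = i1 := Fin.ext hkv
            rw [this, he1i1, he2i1, hx1z, ← hceq]; ring
        · have hk0 : k ≠ i0 := by
            intro hh; rw [hh] at hk; simp [hi0] at hk
          have hk1 : k ≠ i1 := by
            intro hh; rw [hh] at hk; simp [hi1] at hk
          rw [hzero k hk0 hk1]
          have hk0' : (k : ℕ) ≠ 0 := by omega
          have hk1' : (k : ℕ) ≠ 1 := by omega
          simp [e1, e2, hk0', hk1']
      · -- c > 0, take t = u1 * x i0 / c
        refine ⟨u1 * x i0 / c, ⟨div_nonneg (mul_nonneg hu1.le hx0) hc0,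
          (div_le_one hcpos).mpr (by nlinarith)⟩, ?_⟩
        funext k
        rw [hzt _ k]
        rcases Nat.lt_or_ge (k : ℕ) 2 with hk | hk
        · interval_cases hkv : (k : ℕ)
          · have hki : k = i0 := Fin.ext hkv
            rw [hki, he1i0, he2i0]
            field_simp
            ring
          · have hki : k = i1 := Fin.ext hkv
            rw [hki, he1i1, he2i1]
            have hA : c / u1 * (u1 * x i0 / c) * 0 + c / u1 * (1 - u1 * x i0 / c) * 1
                = c / u1 - x i0 := by field_simp; ring
            rw [hA, eq_sub_iff_add_eq, eq_div_iff hu1.ne']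
            linarith
        · have hk0 : k ≠ i0 := by
            intro hh; rw [hh] at hk; simp [hi0] at hk
          have hk1 : k ≠ i1 := by
            intro hh; rw [hh] at hk; simp [hi1] at hk
          rw [hzero k hk0 hk1]
          have hk0' : (k : ℕ) ≠ 0 := by omega
          have hk1' : (k : ℕ) ≠ 1 := by omega
          simp [e1, e2, hk0', hk1']
    · rintro ⟨t, ht, rfl⟩
      refine ⟨hztfeas t, fun y hy => ?_⟩
      rw [hztsum t ht, hc]
      exact lb_aux i0 i1 hij u1 u1 κ η hu1 le_rfl y ((hfeas_def y).mp hy)
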